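/- arXiv:2308.09050 — 3 statements merged into one kernel-verified Lean document; each statement's English description precedes it below -/
import Mathlib

section
/- If f : ℝ → ℝ is continuous with polynomial growth and attains a global minimum, then the infimum over all (μ, σ) ∈ ℝ × ℝ⁺ of F(μ, σ) = ∫ f(x) Γ_{μ,σ}(x) dx equals the minimum of f, where Γ_{μ,σ} is the Gaussian density with mean μ and standard deviation σ. -/
open Real MeasureTheory Filter Topology

noncomputable def gauss (μ σ x : ℝ) : ℝ :=
  Real.exp (-(x - μ)^2 / (2 * σ^2)) / (Real.sqrt (2 * Real.pi) * σ)

noncomputable def relaxF (f : ℝ → ℝ) (μ σ : ℝ) : ℝ := ∫ x : ℝ, f x * gauss μ σ x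

def PolyGrowth (f : ℝ → ℝ) : Prop :=
  ∃ m : ℝ, 0 < m ∧ Tendsto (fun x : ℝ => f x / |x| ^ m) (cocompact ℝ) (𝓝 0)

lemma gauss01 (y : ℝ) : gauss 0 1 y = Real.exp (-(1/2) * y^2) / Real.sqrt (2*Real.pi) := by
  unfold gauss; norm_num; ring_nf

lemma integral_gauss01 : ∫ y : ℝ, gauss 0 1 y = 1 := by
  simp_rw [gauss01, div_eq_mul_inv, integral_mul_const, integral_gaussian]
  rw [show (π / (1 * 2⁻¹)) = 2 * π by ring]
  rw [mul_inv_cancel₀ (by positivity)]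

lemma gauss_shift (μ σ y : ℝ) (hσ : 0 < σ) : gauss μ σ (σ * y + μ) = gauss 0 1 y / σ := by
  unfold gauss
  rw [show -(σ*y+μ-μ)^2 / (2*σ^2) = -(y-0)^2/(2*1^2) by field_simp; ring]
  field_simp

lemma gauss_nonneg (μ σ x : ℝ) (hσ : 0 ≤ σ) : 0 ≤ gauss μ σ x := by
  unfold gauss; positivity

lemma cov (f : ℝ → ℝ) (μ σ : ℝ) (hσ : 0 < σ) :
    ∫ y : ℝ, f (μ + σ * y) * gauss 0 1 y = relaxF f μ σ := by
  have h : ∀ y : ℝ, f (μ + σ * y) * gauss 0 1 y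
      = σ • ((fun t => f (t + μ) * gauss μ σ (t + μ)) (σ * y)) := by
    intro y
    simp only [smul_eq_mul]
    rw [show σ * y + μ = μ + σ * y by ring] at *
    rw [show gauss μ σ (μ + σ * y) = gauss 0 1 y / σ by
      rw [show μ + σ * y = σ * y + μ by ring]; exact gauss_shift μ σ y hσ]
    field_simp
  simp_rw [h]
  rw [integral_smul,
    show (∫ a : ℝ, f (σ * a + μ) * gauss μ σ (σ * a + μ))
        = |σ⁻¹| • ∫ t : ℝ, f (t + μ) * gauss μ σ (t + μ) from
      Measure.integral_comp_mul_left (fun t => f (t + μ) * gauss μ σ (t + μ)) σ,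
    smul_smul, abs_of_pos (inv_pos.mpr hσ), mul_inv_cancel₀ hσ.ne', one_smul,
    show (∫ t : ℝ, f (t + μ) * gauss μ σ (t + μ)) = ∫ t : ℝ, f t * gauss μ σ t from
      integral_add_right_eq_self (fun t => f t * gauss μ σ t) μ]
  rfl

lemma exists_bound {f : ℝ → ℝ} {m : ℝ} (hf : Continuous f) (hm : 0 < m)
    (ht : Tendsto (fun x : ℝ => f x / |x| ^ m) (cocompact ℝ) (𝓝 0)) :
    ∃ C : ℝ, 1 ≤ C ∧ ∀ x, |f x| ≤ C * (1 + |x| ^ m) := by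
  have h1 : ∀ᶠ x in cocompact ℝ, |f x / |x| ^ m| < 1 := by
    have := Metric.tendsto_nhds.mp ht 1 one_pos
    simp only [Real.dist_eq, sub_zero] at this; exact this
  rw [Filter.hasBasis_cocompact.eventually_iff] at h1
  obtain ⟨K, hK, hKs⟩ := h1
  obtain ⟨r, hr⟩ := hK.isBounded.subset_closedBall 0
  set R := max r 0 with hR
  have hR0 : 0 ≤ R := le_max_right _ _
  obtain ⟨M, hM⟩ := (isCompact_closedBall (0:ℝ) R).exists_bound_of_continuousOn
    hf.continuousOn
  refine ⟨max M 1, le_max_right _ _, fun x => ?_⟩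
  rcases le_or_gt |x| R with hx | hx
  · have hx' : x ∈ Metric.closedBall (0:ℝ) R := by
      simpa [Real.dist_eq] using hx
    calc |f x| ≤ M := by simpa using hM x hx'
      _ ≤ max M 1 := le_max_left _ _
      _ ≤ max M 1 * (1 + |x| ^ m) := by
          nlinarith [Real.rpow_nonneg (abs_nonneg x) m, le_max_right M 1]
  · have hxK : x ∉ K := fun hxK => by
      have := hr hxK
      simp only [Metric.mem_closedBall, Real.dist_eq, sub_zero] at this
      exact absurd this (not_le.mpr (lt_of_le_of_lt (le_max_left r 0) hx))
    have hxpos : 0 < |x| := lt_of_le_of_lt hR0 hx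
    have hpow : 0 < |x| ^ m := Real.rpow_pos_of_pos hxpos m
    have := hKs (Set.mem_compl hxK)
    rw [abs_div, abs_of_pos hpow, div_lt_one hpow] at this
    calc |f x| ≤ |x| ^ m := this.le
      _ ≤ max M 1 * (1 + |x| ^ m) := by
          nlinarith [Real.rpow_nonneg (abs_nonneg x) m, le_max_right M 1]

lemma integrable_abs_rpow_mul_exp {b : ℝ} (hb : 0 < b) {s : ℝ} (hs : -1 < s) :
    Integrable fun x : ℝ => |x| ^ s * Real.exp (-b * x ^ 2) := by
  rw [← integrableOn_univ, ← @Set.Iio_union_Ici _ _ (0 : ℝ), integrableOn_union,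
    integrableOn_Ici_iff_integrableOn_Ioi]
  constructor
  · rw [← (Measure.measurePreserving_neg (volume : Measure ℝ)).integrableOn_comp_preimage
        (Homeomorph.neg ℝ).measurableEmbedding]
    simp only [Function.comp_def, neg_sq, Set.neg_preimage, Set.neg_Iio, neg_neg, neg_zero,
      abs_neg]
    exact (integrableOn_rpow_mul_exp_neg_mul_sq hb hs).congr_fun
      (fun x hx => by rw [abs_of_pos hx]) measurableSet_Ioi
  · exact (integrableOn_rpow_mul_exp_neg_mul_sq hb hs).congr_fun
      (fun x hx => by rw [abs_of_pos hx]) measurableSet_Ioi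

noncomputable def bFn (C m μ s : ℝ) (y : ℝ) : ℝ :=
  (C * (1 + 2 ^ m * |μ| ^ m) / Real.sqrt (2 * Real.pi)) * Real.exp (-(1/2) * y ^ 2)
  + (C * 2 ^ m * s / Real.sqrt (2 * Real.pi)) * (|y| ^ m * Real.exp (-(1/2) * y ^ 2))

lemma bFn_integrable (C m μ s : ℝ) (hm : 0 < m) : Integrable (bFn C m μ s) :=
  ((integrable_exp_neg_mul_sq (by norm_num : (0:ℝ) < 1/2)).const_mul _).add
  ((integrable_abs_rpow_mul_exp (by norm_num : (0:ℝ) < 1/2)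
    (by linarith : (-1:ℝ) < m)).const_mul _)

lemma gauss01_continuous : Continuous (gauss 0 1) := by
  simp only [funext gauss01]
  fun_prop

lemma gauss01_integrable : Integrable (gauss 0 1) := by
  simp_rw [funext gauss01]
  exact (integrable_exp_neg_mul_sq (by norm_num : (0:ℝ) < 1/2)).div_const _

lemma abs_le_bFn {f : ℝ → ℝ} {C m : ℝ} (μ σ s : ℝ) (hC : 0 ≤ C)
    (hbd : ∀ x, |f x| ≤ C * (1 + |x| ^ m)) (hm : 0 < m) (hσ : 0 ≤ σ)
    (hs : σ ^ m ≤ s) (y : ℝ) :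
    |f (μ + σ * y) * gauss 0 1 y| ≤ bFn C m μ s y := by
  have hg0 : 0 ≤ gauss 0 1 y := gauss_nonneg 0 1 y zero_le_one
  have h2m : (0:ℝ) < 2 ^ m := Real.rpow_pos_of_pos two_pos m
  have key : |μ + σ * y| ^ m ≤ 2 ^ m * (|μ| ^ m + s * |y| ^ m) := by
    have h1 : |μ + σ * y| ≤ 2 * max |μ| (σ * |y|) := by
      calc |μ + σ * y| ≤ |μ| + |σ * y| := abs_add_le _ _
        _ = |μ| + σ * |y| := by rw [abs_mul, abs_of_nonneg hσ]
        _ ≤ max |μ| (σ * |y|) + max |μ| (σ * |y|) :=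
            add_le_add (le_max_left _ _) (le_max_right _ _)
        _ = 2 * max |μ| (σ * |y|) := by ring
    have h2 : |μ + σ * y| ^ m ≤ (2 * max |μ| (σ * |y|)) ^ m :=
      Real.rpow_le_rpow (abs_nonneg _) h1 hm.le
    have hmax0 : 0 ≤ max |μ| (σ * |y|) := le_trans (abs_nonneg μ) (le_max_left _ _)
    rw [Real.mul_rpow two_pos.le hmax0] at h2
    have h3 : (max |μ| (σ * |y|)) ^ m ≤ |μ| ^ m + s * |y| ^ m := by
      have hsy : (σ * |y|) ^ m = σ ^ m * |y| ^ m := Real.mul_rpow hσ (abs_nonneg _)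
      have hσm : σ ^ m * |y| ^ m ≤ s * |y| ^ m :=
        mul_le_mul_of_nonneg_right hs (Real.rpow_nonneg (abs_nonneg _) _)
      have hs0 : 0 ≤ s := le_trans (Real.rpow_nonneg hσ m) hs
      rcases max_cases |μ| (σ * |y|) with ⟨hmax, _⟩ | ⟨hmax, _⟩ <;> rw [hmax]
      · exact le_add_of_nonneg_right
          (mul_nonneg hs0 (Real.rpow_nonneg (abs_nonneg _) _))
      · rw [hsy]
        exact le_add_of_nonneg_left (Real.rpow_nonneg (abs_nonneg _) _) |>.trans
          (add_le_add le_rfl hσm)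
    calc |μ + σ * y| ^ m ≤ 2 ^ m * (max |μ| (σ * |y|)) ^ m := h2
      _ ≤ 2 ^ m * (|μ| ^ m + s * |y| ^ m) := by
          exact mul_le_mul_of_nonneg_left h3 h2m.le
  calc |f (μ + σ * y) * gauss 0 1 y| = |f (μ + σ * y)| * gauss 0 1 y := by
        rw [abs_mul, abs_of_nonneg hg0]
    _ ≤ (C * (1 + 2 ^ m * (|μ| ^ m + s * |y| ^ m))) * gauss 0 1 y := by
        apply mul_le_mul_of_nonneg_right _ hg0
        calc |f (μ + σ * y)| ≤ C * (1 + |μ + σ * y| ^ m) := hbd _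
          _ ≤ C * (1 + 2 ^ m * (|μ| ^ m + s * |y| ^ m)) := by
              apply mul_le_mul_of_nonneg_left _ hC
              linarith
    _ = bFn C m μ s y := by
        rw [gauss01, bFn]; field_simp; ring

lemma integrable_G {f : ℝ → ℝ} {C m : ℝ} (hf : Continuous f) (μ σ : ℝ) (hC : 0 ≤ C)
    (hbd : ∀ x, |f x| ≤ C * (1 + |x| ^ m)) (hm : 0 < m) (hσ : 0 ≤ σ) :
    Integrable (fun y => f (μ + σ * y) * gauss 0 1 y) := by
  apply Integrable.mono' (bFn_integrable C m μ (σ ^ m) hm)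
  · exact ((hf.comp (by fun_prop)).mul gauss01_continuous).aestronglyMeasurable
  · refine Filter.Eventually.of_forall fun y => ?_
    rw [Real.norm_eq_abs]
    exact abs_le_bFn μ σ (σ ^ m) hC hbd hm hσ le_rfl y

lemma lower_bound {f : ℝ → ℝ} {C m : ℝ} (hf : Continuous f) (xbar : ℝ)
    (hmin : ∀ x, f xbar ≤ f x) (μ σ : ℝ) (hC : 0 ≤ C)
    (hbd : ∀ x, |f x| ≤ C * (1 + |x| ^ m)) (hm : 0 < m) (hσ : 0 < σ) :
    f xbar ≤ relaxF f μ σ := by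
  rw [← cov f μ σ hσ]
  have h1 : f xbar = ∫ y : ℝ, f xbar * gauss 0 1 y := by
    rw [MeasureTheory.integral_const_mul, integral_gauss01, mul_one]
  rw [h1]
  apply integral_mono (gauss01_integrable.const_mul _)
    (integrable_G hf μ σ hC hbd hm hσ.le)
  intro y
  exact mul_le_mul_of_nonneg_right (hmin _) (gauss_nonneg 0 1 y zero_le_one)

lemma tendsto_relax {f : ℝ → ℝ} {C m : ℝ} (hf : Continuous f) (xbar : ℝ) (hC : 0 ≤ C)
    (hbd : ∀ x, |f x| ≤ C * (1 + |x| ^ m)) (hm : 0 < m) :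
    Tendsto (fun n : ℕ => relaxF f xbar (1 / (n + 1))) atTop (𝓝 (f xbar)) := by
  have hσpos : ∀ n : ℕ, (0:ℝ) < 1 / (n + 1) := fun n => by positivity
  have hcov : ∀ n : ℕ, relaxF f xbar (1 / (n + 1))
      = ∫ y : ℝ, f (xbar + (1 / (n + 1)) * y) * gauss 0 1 y := fun n =>
    (cov f xbar _ (hσpos n)).symm
  simp_rw [hcov]
  have hlim : (f xbar : ℝ) = ∫ y : ℝ, f xbar * gauss 0 1 y := by
    rw [MeasureTheory.integral_const_mul, integral_gauss01, mul_one]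
  rw [hlim]
  apply tendsto_integral_of_dominated_convergence (bFn C m xbar 1)
  · intro n
    exact ((hf.comp (by fun_prop)).mul gauss01_continuous).aestronglyMeasurable
  · exact bFn_integrable C m xbar 1 hm
  · intro n
    refine Filter.Eventually.of_forall fun y => ?_
    rw [Real.norm_eq_abs]
    exact abs_le_bFn xbar _ 1 hC hbd hm (hσpos n).le
      (Real.rpow_le_one (hσpos n).le (by
        rw [div_le_one (by positivity)]; linarith [Nat.cast_nonneg (α := ℝ) n]) hm.le) y
  · refine Filter.Eventually.of_forall fun y => ?_
    have h1 : Tendsto (fun n : ℕ => xbar + (1 / (n + 1 : ℝ)) * y) atTop (𝓝 xbar) := by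
      have := (tendsto_one_div_add_atTop_nhds_zero_nat).mul_const y
      simpa using tendsto_const_nhds.add this
    exact ((hf.continuousAt).tendsto.comp h1).mul_const _

theorem stmt0 (f : ℝ → ℝ) (hf : Continuous f) (hg : PolyGrowth f)
    (xbar : ℝ) (hmin : ∀ x, f xbar ≤ f x) :
    IsGLB {y : ℝ | ∃ μ σ : ℝ, 0 < σ ∧ y = relaxF f μ σ} (f xbar) := by
  obtain ⟨m, hm, ht⟩ := hg
  obtain ⟨C, hC1, hbd⟩ := exists_bound hf hm ht
  have hC : (0:ℝ) ≤ C := le_trans zero_le_one hC1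
  constructor
  · rintro y ⟨μ, σ, hσ, rfl⟩
    exact lower_bound hf xbar hmin μ σ hC hbd hm hσ
  · intro b hb
    refine ge_of_tendsto' (tendsto_relax hf xbar hC hbd hm) fun n => ?_
    exact hb ⟨xbar, 1 / (n + 1), by positivity, rfl⟩
end

section
/- The gradient of the relaxed functional F is given by ∂F/∂μ = ∫ ((x-μ)/σ²) f(x) Γ_{μ,σ}(x) dx and ∂F/∂σ = ∫ ((x-μ-σ)(x-μ+σ)/σ³) f(x) Γ_{μ,σ}(x) dx. -/
open Real MeasureTheory Filter Topology

open Metric in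
lemma polybound (K : ℕ) (a : ℝ) (ha : 0 < a) :
    ∃ D : ℝ, 0 ≤ D ∧ ∀ y : ℝ, (1 + |y|)^K ≤ D * Real.exp (a * y^2) := by
  refine ⟨2^K * (2 + K.factorial / a^K), by positivity, fun y => ?_⟩
  have hexp1 : (1:ℝ) ≤ Real.exp (a * y^2) := by
    rw [Real.one_le_exp_iff]; positivity
  have h1 : (1 + |y|)^K ≤ (2 * max 1 |y|)^K := by
    apply pow_le_pow_left₀ (by positivity)
    rcases le_total 1 |y| with h | h
    · rw [max_eq_right h]; linarith
    · rw [max_eq_left h]; linarith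
  have h2 : (max 1 |y|)^K ≤ 1 + (y^2)^K := by
    rcases le_total 1 |y| with h | h
    · rw [max_eq_right h]
      have : |y|^K ≤ (y^2)^K := by
        apply pow_le_pow_left₀ (abs_nonneg y)
        nlinarith [sq_abs y]
      have h0 : (0:ℝ) ≤ (y^2)^K := by positivity
      linarith
    · rw [max_eq_left h]
      simp only [one_pow]
      have h0 : (0:ℝ) ≤ (y^2)^K := by positivity
      linarith
  have h3 : (y^2)^K ≤ (K.factorial / a^K) * Real.exp (a * y^2) := by
    have hb := Real.pow_div_factorial_le_exp (x := a * y^2) (by positivity) K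
    rw [div_le_iff₀ (by positivity : (0:ℝ) < (K.factorial : ℝ))] at hb
    rw [mul_pow] at hb
    rw [div_mul_eq_mul_div, le_div_iff₀ (by positivity : (0:ℝ) < a^K)]
    calc (y^2)^K * a^K = a^K * (y^2)^K := by ring
      _ ≤ Real.exp (a*y^2) * K.factorial := hb
      _ = K.factorial * Real.exp (a*y^2) := by ring
  have h4 : (2 * max 1 |y|)^K = 2^K * (max 1 |y|)^K := by rw [mul_pow]
  have h2K : (0:ℝ) ≤ 2^K := by positivity
  calc (1 + |y|)^K ≤ 2^K * (max 1 |y|)^K := by rw [← h4]; exact h1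
    _ ≤ 2^K * (1 + (y^2)^K) := by
        apply mul_le_mul_of_nonneg_left h2 h2K
    _ ≤ 2^K * (1 + (K.factorial / a^K) * Real.exp (a * y^2)) := by
        apply mul_le_mul_of_nonneg_left (by linarith) h2K
    _ ≤ 2^K * (2 + K.factorial / a^K) * Real.exp (a * y^2) := by
        have hfa : (0:ℝ) ≤ K.factorial / a^K := by positivity
        nlinarith

open Metric in
lemma fbound (f : ℝ → ℝ) (hf : Continuous f) (hg : PolyGrowth f) :
    ∃ (C : ℝ) (n : ℕ), 0 ≤ C ∧ ∀ x, |f x| ≤ C * (1 + |x|)^n := by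
  obtain ⟨m, hm, ht⟩ := hg
  set n : ℕ := ⌈m⌉₊ with hn
  have hmn : m ≤ (n:ℝ) := Nat.le_ceil m
  have h1 : ∀ᶠ x : ℝ in cocompact ℝ, |f x / |x| ^ m| < 1 := by
    have := NormedAddCommGroup.tendsto_nhds_zero.mp ht 1 one_pos
    filter_upwards [this] with x hx
    rwa [Real.norm_eq_abs] at hx
  obtain ⟨K, hK, hKs⟩ := mem_cocompact.mp h1
  obtain ⟨R, hR⟩ := hK.isBounded.subset_closedBall 0
  set R' : ℝ := max R 1 with hR'
  have hR1 : (1:ℝ) ≤ R' := le_max_right _ _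
  -- outer bound
  have houter : ∀ x : ℝ, R' < |x| → |f x| ≤ (1 + |x|)^n := by
    intro x hx
    have hx1 : (1:ℝ) ≤ |x| := le_trans hR1 hx.le
    have hxK : x ∉ K := by
      intro hxK
      have := hR hxK
      simp only [Metric.mem_closedBall, Real.dist_eq, sub_zero] at this
      have : |x| ≤ R' := le_trans this (le_max_left _ _)
      linarith
    have hlt : |f x / |x| ^ m| < 1 := hKs hxK
    have hpos : (0:ℝ) < |x| ^ m := Real.rpow_pos_of_pos (by linarith) m
    rw [abs_div, abs_of_pos hpos, div_lt_one hpos] at hlt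
    calc |f x| ≤ |x| ^ m := hlt.le
      _ ≤ |x| ^ (n:ℝ) := Real.rpow_le_rpow_of_exponent_le hx1 hmn
      _ = |x| ^ n := Real.rpow_natCast _ n
      _ ≤ (1 + |x|)^n := by
          apply pow_le_pow_left₀ (abs_nonneg x)
          linarith
  -- inner bound
  obtain ⟨C, hC⟩ := (isCompact_Icc (a := -R') (b := R')).exists_bound_of_continuousOn hf.continuousOn
  refine ⟨max C 1, n, by positivity, fun x => ?_⟩
  have hone : (1:ℝ) ≤ (1 + |x|)^n := by
    have h0 : (1:ℝ) ≤ 1 + |x| := by linarith [abs_nonneg x]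
    calc (1:ℝ) = 1^n := (one_pow n).symm
      _ ≤ (1 + |x|)^n := pow_le_pow_left₀ zero_le_one h0 n
  rcases le_or_gt |x| R' with h | h
  · have hx : x ∈ Set.Icc (-R') R' := by
      constructor <;> [linarith [neg_abs_le x]; linarith [le_abs_self x]]
    have := hC x hx
    rw [Real.norm_eq_abs] at this
    calc |f x| ≤ C := this
      _ ≤ max C 1 := le_max_left _ _
      _ ≤ max C 1 * (1 + |x|)^n := by nlinarith [le_max_right C 1]
  · calc |f x| ≤ (1 + |x|)^n := houter x h
      _ ≤ max C 1 * (1 + |x|)^n := by nlinarith [le_max_right C 1]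

open Metric in
lemma intW (f : ℝ → ℝ) (hf : Continuous f) (hg : PolyGrowth f) (c a : ℝ) (ha : 0 < a) (k : ℕ) :
    Integrable (fun x => (1 + |x - c|)^k * |f x| * Real.exp (-(a * (x - c)^2))) := by
  obtain ⟨C, n, hC, hfb⟩ := fbound f hf hg
  obtain ⟨D, hD, hDb⟩ := polybound (k + n) (a/2) (by positivity)
  set A : ℝ := C * (1 + |c|)^n * D with hA
  have hInt : Integrable (fun x : ℝ => A * Real.exp (-(a/2) * (x - c)^2)) :=
    ((integrable_exp_neg_mul_sq (half_pos ha)).comp_sub_right c).const_mul A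
  refine hInt.mono' ?_ ?_
  · exact ((((continuous_const.add (continuous_id.sub continuous_const).abs).pow k).mul
      hf.abs).mul (Real.continuous_exp.comp (by fun_prop))).aestronglyMeasurable
  · filter_upwards with x
    have hnn : (0:ℝ) ≤ (1 + |x - c|)^k * |f x| * Real.exp (-(a * (x - c)^2)) := by positivity
    rw [Real.norm_eq_abs, abs_of_nonneg hnn]
    have hxc : (1:ℝ) + |x| ≤ (1 + |c|) * (1 + |x - c|) := by
      have h1 : |x| ≤ |x - c| + |c| := by
        calc |x| = |x - c + c| := by ring_nf
          _ ≤ |x - c| + |c| := abs_add_le _ _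
      nlinarith [abs_nonneg (x - c), abs_nonneg c]
    have hfx : |f x| ≤ C * (1 + |c|)^n * (1 + |x - c|)^n := by
      calc |f x| ≤ C * (1 + |x|)^n := hfb x
        _ ≤ C * ((1 + |c|) * (1 + |x - c|))^n := by
            apply mul_le_mul_of_nonneg_left _ hC
            apply pow_le_pow_left₀ (by positivity) hxc
        _ = C * (1 + |c|)^n * (1 + |x - c|)^n := by rw [mul_pow]; ring
    have e1 : Real.exp (a/2 * (x-c)^2) * Real.exp (-(a * (x - c)^2))
        = Real.exp (-(a/2) * (x-c)^2) := by
      rw [← Real.exp_add]; ring_nf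
    calc (1 + |x - c|)^k * |f x| * Real.exp (-(a * (x - c)^2))
        ≤ (1 + |x - c|)^k * (C * (1 + |c|)^n * (1 + |x - c|)^n) * Real.exp (-(a * (x - c)^2)) := by
          apply mul_le_mul_of_nonneg_right _ (Real.exp_pos _).le
          exact mul_le_mul_of_nonneg_left hfx (by positivity)
      _ = (C * (1 + |c|)^n) * ((1 + |x - c|)^(k + n) * Real.exp (-(a * (x - c)^2))) := by
          rw [pow_add]; ring
      _ ≤ (C * (1 + |c|)^n) * ((D * Real.exp (a/2 * (x-c)^2)) * Real.exp (-(a * (x - c)^2))) := by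
          apply mul_le_mul_of_nonneg_left _ (by positivity)
          exact mul_le_mul_of_nonneg_right (hDb (x - c)) (Real.exp_pos _).le
      _ = A * Real.exp (-(a/2) * (x-c)^2) := by
          rw [mul_assoc D, e1, hA]; ring

open Metric in
set_option maxHeartbeats 1600000 in
theorem stmt6 (f : ℝ → ℝ) (hf : Continuous f) (hg : PolyGrowth f)
    (μ σ : ℝ) (hσ : 0 < σ) :
    HasDerivAt (fun m => relaxF f m σ)
      (∫ x : ℝ, ((x - μ) / σ^2) * f x * gauss μ σ x) μ ∧
    HasDerivAt (fun s => relaxF f μ s)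
      (∫ x : ℝ, ((x - μ - σ) * (x - μ + σ) / σ^3) * f x * gauss μ σ x) σ := by
  have hπ : (0:ℝ) < Real.sqrt (2*Real.pi) := Real.sqrt_pos.mpr (by positivity)
  have hgauss_pos : ∀ m s x : ℝ, 0 < s → 0 < gauss m s x := by
    intro m s x hs; unfold gauss; positivity
  have hgc : ∀ m s : ℝ, Continuous (fun x => gauss m s x) := by
    intro m s; unfold gauss
    exact (Real.continuous_exp.comp (by fun_prop)).div_const _
  have hF_int : Integrable (fun x => f x * gauss μ σ x) := by
    refine (((intW f hf hg μ (1/(2*σ^2)) (by positivity) 0).const_mul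
      (1/(Real.sqrt (2*Real.pi) * σ))).mono' ?_ ?_)
    · exact (hf.mul (hgc μ σ)).aestronglyMeasurable
    · filter_upwards with x
      rw [Real.norm_eq_abs, abs_mul, abs_of_pos (hgauss_pos μ σ x hσ)]
      apply le_of_eq
      unfold gauss
      have e : -(x - μ)^2 / (2*σ^2) = -(1/(2*σ^2) * (x-μ)^2) := by ring
      rw [e, pow_zero]
      ring
  constructor
  · -- derivative in μ
    set K₁ : ℝ := (1+σ)*Real.exp (1/2)/(σ^2 * (Real.sqrt (2*Real.pi) * σ)) with hK₁
    have h_meas : ∀ᶠ m in 𝓝 μ, AEStronglyMeasurable (fun x => f x * gauss m σ x)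
        (volume : Measure ℝ) :=
      Eventually.of_forall fun m => (hf.mul (hgc m σ)).aestronglyMeasurable
    have h'_meas : AEStronglyMeasurable (fun x => ((x - μ)/σ^2) * f x * gauss μ σ x)
        (volume : Measure ℝ) :=
      ((((continuous_id.sub continuous_const).div_const _).mul hf).mul
        (hgc μ σ)).aestronglyMeasurable
    have bint : Integrable (fun x => K₁ * ((1+|x-μ|)^1 * |f x| *
        Real.exp (-(1/(4*σ^2) * (x-μ)^2)))) :=
      (intW f hf hg μ (1/(4*σ^2)) (by positivity) 1).const_mul K₁
    have h_bound : ∀ᵐ x : ℝ, ∀ m ∈ ball μ σ,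
        ‖((x - m)/σ^2) * f x * gauss m σ x‖ ≤ K₁ * ((1+|x-μ|)^1 * |f x| *
          Real.exp (-(1/(4*σ^2) * (x-μ)^2))) := by
      filter_upwards with x
      intro m hm
      rw [mem_ball, Real.dist_eq] at hm
      have hm' := abs_lt.mp hm
      have hσ2 : (0:ℝ) < σ^2 := by positivity
      have hmm : (μ - m)^2 ≤ σ^2 := by nlinarith [hm'.1, hm'.2]
      have key : (x-μ)^2/2 - σ^2 ≤ (x-m)^2 := by
        nlinarith [sq_nonneg ((x-μ) + 2*(μ-m)), hmm]
      have harg : -(x - m)^2/(2*σ^2) ≤ 1/2 + -(1/(4*σ^2) * (x-μ)^2) := by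
        rw [div_le_iff₀ (by positivity : (0:ℝ) < 2*σ^2)]
        have expand : (1/2 + -(1/(4*σ^2) * (x-μ)^2)) * (2*σ^2) = σ^2 - (x-μ)^2/2 := by
          field_simp; ring
        rw [expand]; linarith
      have hexp : Real.exp (-(x-m)^2/(2*σ^2)) ≤
          Real.exp (1/2) * Real.exp (-(1/(4*σ^2) * (x-μ)^2)) := by
        rw [← Real.exp_add]; exact Real.exp_le_exp.mpr harg
      have h1 : |x - m| ≤ (1+σ) * (1 + |x-μ|) := by
        have h2 : |x - m| ≤ |x - μ| + |μ - m| := by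
          calc |x-m| = |(x-μ) + (μ-m)| := by ring_nf
            _ ≤ |x-μ| + |μ-m| := abs_add_le _ _
        have h3 : |μ - m| ≤ σ := by rw [abs_sub_comm]; exact hm.le
        nlinarith [abs_nonneg (x - μ)]
      rw [Real.norm_eq_abs, abs_mul, abs_mul, abs_div, abs_of_pos (hgauss_pos m σ x hσ),
        abs_of_pos hσ2]
      unfold gauss
      calc |x-m|/σ^2 * |f x| * (Real.exp (-(x-m)^2/(2*σ^2))/(Real.sqrt (2*Real.pi) * σ))
          ≤ ((1+σ)*(1+|x-μ|))/σ^2 * |f x| *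
            ((Real.exp (1/2) * Real.exp (-(1/(4*σ^2) * (x-μ)^2)))/(Real.sqrt (2*Real.pi) * σ)) := by
            gcongr
        _ = K₁ * ((1+|x-μ|)^1 * |f x| * Real.exp (-(1/(4*σ^2) * (x-μ)^2))) := by
            rw [hK₁]; field_simp
    have h_diff : ∀ᵐ x : ℝ, ∀ m ∈ ball μ σ,
        HasDerivAt (fun m => f x * gauss m σ x) (((x - m)/σ^2) * f x * gauss m σ x) m := by
      filter_upwards with x
      intro m _
      have h1 : HasDerivAt (fun m : ℝ => x - m) (-1) m := (hasDerivAt_id m).const_sub x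
      have h2 : HasDerivAt (fun m : ℝ => (x - m)^2) (2*(x-m)*(-1)) m := by
        exact ((hasDerivAt_pow 2 (x - m)).comp m h1).congr_deriv (by norm_num)
      have h0 : HasDerivAt (fun m : ℝ => -(x - m)^2 / (2*σ^2)) ((x - m)/σ^2) m := by
        have h3 := h2.neg.div_const (2*σ^2)
        refine h3.congr_deriv ?_
        field_simp
      have h4 := ((h0.exp).div_const (Real.sqrt (2*Real.pi) * σ)).const_mul (f x)
      have h5 : HasDerivAt (fun m => f x * gauss m σ x)
          (f x * (Real.exp (-(x - m)^2/(2*σ^2)) * ((x - m)/σ^2) / (Real.sqrt (2*Real.pi) * σ))) m := by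
        simpa [gauss] using h4
      convert h5 using 1
      simp only [gauss]
      ring
    have main := hasDerivAt_integral_of_dominated_loc_of_deriv_le (ball_mem_nhds μ hσ) h_meas hF_int h'_meas
      h_bound bint h_diff
    simpa [relaxF] using main.2
  · -- derivative in σ
    set K₂ : ℝ := (1+9*σ^2/4)*(8/σ^3)*(2/(Real.sqrt (2*Real.pi)*σ)) with hK₂
    have h_meas : ∀ᶠ s in 𝓝 σ, AEStronglyMeasurable (fun x => f x * gauss μ s x)
        (volume : Measure ℝ) :=
      Eventually.of_forall fun s => (hf.mul (hgc μ s)).aestronglyMeasurable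
    have h'_meas : AEStronglyMeasurable
        (fun x => ((x - μ - σ) * (x - μ + σ)/σ^3) * f x * gauss μ σ x)
        (volume : Measure ℝ) := by
      apply Continuous.aestronglyMeasurable
      exact ((((continuous_id.sub continuous_const).sub continuous_const).mul
        ((continuous_id.sub continuous_const).add continuous_const)).div_const _).mul hf
        |>.mul (hgc μ σ)
    have bint : Integrable (fun x => K₂ * ((1+|x-μ|)^2 * |f x| *
        Real.exp (-(2/(9*σ^2) * (x-μ)^2)))) :=
      (intW f hf hg μ (2/(9*σ^2)) (by positivity) 2).const_mul K₂
    have h_bound : ∀ᵐ x : ℝ, ∀ s ∈ ball σ (σ/2),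
        ‖((x - μ - s) * (x - μ + s)/s^3) * f x * gauss μ s x‖ ≤
          K₂ * ((1+|x-μ|)^2 * |f x| * Real.exp (-(2/(9*σ^2) * (x-μ)^2))) := by
      filter_upwards with x
      intro s hs
      rw [mem_ball, Real.dist_eq] at hs
      have hs' := abs_lt.mp hs
      have hs1 : σ/2 < s := by linarith
      have hs2 : s < 3*σ/2 := by linarith
      have hspos : 0 < s := by linarith
      have hs3 : σ^3 ≤ 8 * s^3 := by
        have h := pow_le_pow_left₀ (by positivity : (0:ℝ) ≤ σ/2) (le_of_lt hs1) 3
        rw [div_pow] at h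
        norm_num at h
        linarith
      have ha1 : |(x - μ - s) * (x - μ + s)| ≤ (1+9*σ^2/4)*(1+|x-μ|)^2 := by
        have e : (x - μ - s) * (x - μ + s) = (x-μ)^2 - s^2 := by ring
        rw [e]
        have h2 : |(x-μ)^2 - s^2| ≤ (x-μ)^2 + s^2 := by
          have := abs_sub ((x-μ)^2) (s^2)
          simpa [abs_of_nonneg (sq_nonneg (x-μ)), abs_of_nonneg (sq_nonneg s)] using this
        have h3 : s^2 ≤ 9*σ^2/4 := by nlinarith
        have h4 : (x-μ)^2 ≤ (1+|x-μ|)^2 := by nlinarith [abs_nonneg (x-μ), sq_abs (x-μ)]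
        have h5 : (1:ℝ) ≤ (1+|x-μ|)^2 := by nlinarith [abs_nonneg (x-μ)]
        have h6 : 9*σ^2/4 * 1 ≤ 9*σ^2/4 * (1+|x-μ|)^2 :=
          mul_le_mul_of_nonneg_left h5 (by positivity)
        calc |(x-μ)^2 - s^2| ≤ (x-μ)^2 + s^2 := h2
          _ ≤ (1+|x-μ|)^2 + 9*σ^2/4 * (1+|x-μ|)^2 := by linarith
          _ = (1+9*σ^2/4)*(1+|x-μ|)^2 := by ring
      have hinv : 1/s^3 ≤ 8/σ^3 := by
        rw [div_le_div_iff₀ (by positivity) (by positivity)]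
        linarith
      have hexp : Real.exp (-(x-μ)^2/(2*s^2)) ≤ Real.exp (-(2/(9*σ^2) * (x-μ)^2)) := by
        apply Real.exp_le_exp.mpr
        rw [neg_div, neg_le_neg_iff]
        rw [div_mul_eq_mul_div, div_le_div_iff₀ (by positivity) (by positivity)]
        have h4s : 4*s^2 ≤ 9*σ^2 := by nlinarith
        nlinarith [mul_nonneg (by linarith : (0:ℝ) ≤ 9*σ^2 - 4*s^2) (sq_nonneg (x-μ))]
      have hden : 1/(Real.sqrt (2*Real.pi)*s) ≤ 2/(Real.sqrt (2*Real.pi)*σ) := by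
        rw [div_le_div_iff₀ (by positivity) (by positivity)]
        nlinarith [hπ.le]
      have hs3pos : (0:ℝ) < s^3 := by positivity
      rw [Real.norm_eq_abs, abs_mul, abs_mul, abs_div, abs_of_pos (hgauss_pos μ s x hspos),
        abs_of_pos hs3pos]
      unfold gauss
      have t1 : |(x - μ - s) * (x - μ + s)|/s^3 ≤ ((1+9*σ^2/4)*(1+|x-μ|)^2) * (8/σ^3) := by
        rw [div_eq_mul_one_div]
        exact mul_le_mul ha1 hinv (by positivity) (by positivity)
      have t2 : Real.exp (-(x - μ)^2/(2*s^2))/(Real.sqrt (2*Real.pi)*s) ≤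
          Real.exp (-(2/(9*σ^2) * (x-μ)^2)) * (2/(Real.sqrt (2*Real.pi)*σ)) := by
        rw [div_eq_mul_one_div]
        exact mul_le_mul hexp hden (by positivity) (Real.exp_pos _).le
      calc |(x - μ - s) * (x - μ + s)|/s^3 * |f x| *
            (Real.exp (-(x - μ)^2/(2*s^2))/(Real.sqrt (2*Real.pi)*s))
          ≤ (((1+9*σ^2/4)*(1+|x-μ|)^2) * (8/σ^3)) * |f x| *
            (Real.exp (-(2/(9*σ^2) * (x-μ)^2)) * (2/(Real.sqrt (2*Real.pi)*σ))) := by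
            apply mul_le_mul _ t2 (by positivity) (by positivity)
            exact mul_le_mul t1 le_rfl (abs_nonneg _) (by positivity)
        _ = K₂ * ((1+|x-μ|)^2 * |f x| * Real.exp (-(2/(9*σ^2) * (x-μ)^2))) := by
            rw [hK₂]; ring
    have h_diff : ∀ᵐ x : ℝ, ∀ s ∈ ball σ (σ/2),
        HasDerivAt (fun s => f x * gauss μ s x)
          (((x - μ - s) * (x - μ + s)/s^3) * f x * gauss μ s x) s := by
      filter_upwards with x
      intro s hs
      rw [mem_ball, Real.dist_eq] at hs
      have hs' := abs_lt.mp hs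
      have hspos : 0 < s := by linarith
      have hs0 : s ≠ 0 := ne_of_gt hspos
      have hq0 : Real.sqrt (2*Real.pi) ≠ 0 := ne_of_gt hπ
      have hden0 : Real.sqrt (2*Real.pi) * s ≠ 0 := by positivity
      have h2s0 : (2:ℝ)*s^2 ≠ 0 := by positivity
      have hden' : HasDerivAt (fun s : ℝ => 2*s^2) (2*(2*s)) s := by
        simpa using (hasDerivAt_pow 2 s).const_mul 2
      have hu : HasDerivAt (fun s : ℝ => -(x - μ)^2 / (2*s^2)) ((x-μ)^2/s^3) s := by
        have h := (hasDerivAt_const s (-(x-μ)^2)).div hden' h2s0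
        refine h.congr_deriv ?_
        field_simp
        ring
      have hd : HasDerivAt (fun s : ℝ => Real.sqrt (2*Real.pi) * s)
          (Real.sqrt (2*Real.pi)) s := by
        simpa using (hasDerivAt_id s).const_mul (Real.sqrt (2*Real.pi))
      have h4 := ((hu.exp).div hd hden0).const_mul (f x)
      have h5 : HasDerivAt (fun s => f x * gauss μ s x)
          (f x * ((Real.exp (-(x - μ)^2/(2*s^2)) * ((x-μ)^2/s^3) * (Real.sqrt (2*Real.pi) * s) -
            Real.exp (-(x - μ)^2/(2*s^2)) * Real.sqrt (2*Real.pi)) /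
            (Real.sqrt (2*Real.pi) * s)^2)) s := by
        simpa [gauss] using h4
      convert h5 using 1
      simp only [gauss]
      field_simp
      ring
    have main := hasDerivAt_integral_of_dominated_loc_of_deriv_le (ball_mem_nhds σ (by positivity : (0:ℝ) < σ/2))
      h_meas hF_int h'_meas h_bound bint h_diff
    simpa [relaxF] using main.2
end

section
/- Let z : [0,T] → [0,∞) be differentiable with z(0) = 0 and satisfy ż ≤ 2ε√z - 4cz for constants ε > 0 and c ≠ 0. Then √(z(t)) ≤ ε(1 - e^{-2ct})/(2c) for all 0 ≤ t ≤ T; if instead c = 0, then √(z(t)) ≤ εt. -/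
open Real Set

/-- Generic supersolution comparison: if `g*g` is a strict supersolution of
the ODE inequality satisfied by `z`, then `z ≤ g*g` on `[0,T]`. -/
lemma supersol13 (T ε c : ℝ)
    (z : ℝ → ℝ) (hz0 : z 0 = 0)
    (hzdiff : ∀ t ∈ Icc 0 T, DifferentiableAt ℝ z t)
    (hode : ∀ t ∈ Icc 0 T, deriv z t ≤ 2 * ε * Real.sqrt (z t) - 4 * c * z t)
    (g g' : ℝ → ℝ)
    (hgd : ∀ t : ℝ, HasDerivAt g (g' t) t)
    (hgpos : ∀ t : ℝ, 0 ≤ t → 0 < g t)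
    (hstrict : ∀ t ∈ Ico (0:ℝ) T,
      2 * ε * g t - 4 * c * (g t * g t) < 2 * g t * g' t) :
    ∀ t ∈ Icc 0 T, z t ≤ g t * g t := by
  intro t ht
  refine image_le_of_deriv_right_lt_deriv_boundary
    (f := z) (f' := deriv z) (a := 0) (b := T)
    (B := fun t => g t * g t) (B' := fun t => 2 * g t * g' t)
    (fun x hx => (hzdiff x hx).continuousAt.continuousWithinAt)
    (fun x hx => ((hzdiff x (Ico_subset_Icc_self hx)).hasDerivAt).hasDerivWithinAt)
    (by rw [hz0]; exact mul_self_nonneg (g 0))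
    (fun x => by
      have h := (hgd x).fun_mul (hgd x)
      exact h.congr_deriv (by ring))
    (fun x hx hx2 => by
      have h1 := hode x (Ico_subset_Icc_self hx)
      have hgx : (0:ℝ) < g x := hgpos x hx.1
      have h2 : Real.sqrt (z x) = g x := by
        rw [hx2]; exact Real.sqrt_mul_self hgx.le
      rw [h2, hx2] at h1
      have h3 := hstrict x hx
      show deriv z x < 2 * g x * g' x
      linarith) ht

theorem stmt13 (T ε c : ℝ) (hT : 0 ≤ T) (hε : 0 < ε)
    (z : ℝ → ℝ) (hz0 : z 0 = 0) (hznn : ∀ t ∈ Icc 0 T, 0 ≤ z t)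
    (hzdiff : ∀ t ∈ Icc 0 T, DifferentiableAt ℝ z t)
    (hode : ∀ t ∈ Icc 0 T,
      deriv z t ≤ 2 * ε * Real.sqrt (z t) - 4 * c * z t) :
    ∀ t ∈ Icc 0 T,
      (c ≠ 0 → Real.sqrt (z t) ≤ ε * (1 - Real.exp (-2 * c * t)) / (2 * c)) ∧
      (c = 0 → Real.sqrt (z t) ≤ ε * t) := by
  intro t ht
  constructor
  · -- c ≠ 0
    intro hc
    -- A s := (1 - exp(-2cs))/(2c) is nonneg for s ≥ 0
    have hA : ∀ s : ℝ, 0 ≤ s → 0 ≤ (1 - Real.exp (-2 * c * s)) / (2 * c) := by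
      intro s hs
      rcases lt_or_gt_of_ne hc with hneg | hpos
      · apply div_nonneg_iff.mpr
        refine Or.inr ⟨?_, by linarith⟩
        have : (1:ℝ) ≤ Real.exp (-2 * c * s) := by
          rw [← Real.exp_zero]
          apply Real.exp_le_exp.mpr; nlinarith
        linarith
      · apply div_nonneg
        · have : Real.exp (-2 * c * s) ≤ 1 := by
            rw [← Real.exp_zero]
            apply Real.exp_le_exp.mpr; nlinarith
          linarith
        · linarith
    -- for each δ > 0, compare with g_δ
    have key : ∀ δ : ℝ, 0 < δ →
        Real.sqrt (z t) ≤ (ε + δ) * (1 - Real.exp (-2 * c * t)) / (2 * c)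
          + δ * Real.exp (-2 * c * t) := by
      intro δ hδ
      set g : ℝ → ℝ := fun s =>
        (ε + δ) * (1 - Real.exp (-2 * c * s)) / (2 * c) + δ * Real.exp (-2 * c * s) with hgdef
      set g' : ℝ → ℝ := fun s => (ε + δ) - 2 * c * g s with hg'def
      have hexp : ∀ s : ℝ, HasDerivAt (fun u => Real.exp (-2 * c * u))
          (Real.exp (-2 * c * s) * (-2 * c)) s := by
        intro s
        have h := ((hasDerivAt_id s).const_mul (-2 * c)).exp
        simpa using h
      have hgd : ∀ s : ℝ, HasDerivAt g (g' s) s := by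
        intro s
        have h1 : HasDerivAt (fun u => (ε + δ) * (1 - Real.exp (-2 * c * u)) / (2 * c))
            ((ε + δ) * (0 - Real.exp (-2 * c * s) * (-2 * c)) / (2 * c)) s :=
          (((hasDerivAt_const s (1:ℝ)).sub (hexp s)).const_mul (ε + δ)).div_const (2 * c)
        have h2 := (hexp s).const_mul δ
        have h := h1.fun_add h2
        refine h.congr_deriv ?_
        simp only [hg'def, hgdef]
        field_simp
        ring
      have hgpos : ∀ s : ℝ, 0 ≤ s → 0 < g s := by
        intro s hs
        have h1 := hA s hs
        have h2 : 0 < Real.exp (-2 * c * s) := Real.exp_pos _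
        simp only [hgdef]
        have : 0 ≤ (ε + δ) * (1 - Real.exp (-2 * c * s)) / (2 * c) := by
          rw [mul_div_assoc]
          exact mul_nonneg (by linarith) h1
        nlinarith
      have hstrict : ∀ s ∈ Ico (0:ℝ) T,
          2 * ε * g s - 4 * c * (g s * g s) < 2 * g s * g' s := by
        intro s hs
        have hg := hgpos s hs.1
        simp only [hg'def]
        nlinarith
      have hle := supersol13 T ε c z hz0 hzdiff hode g g' hgd hgpos hstrict t ht
      calc Real.sqrt (z t) ≤ Real.sqrt (g t * g t) := Real.sqrt_le_sqrt hle
        _ = g t := Real.sqrt_mul_self (hgpos t ht.1).le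
    -- take δ → 0
    apply le_of_forall_pos_le_add
    intro η hη
    have hC : 0 < (1 - Real.exp (-2 * c * t)) / (2 * c) + Real.exp (-2 * c * t) := by
      have := hA t ht.1
      have := Real.exp_pos (-2 * c * t)
      linarith
    have h := key (η / ((1 - Real.exp (-2 * c * t)) / (2 * c) + Real.exp (-2 * c * t)))
      (div_pos hη hC)
    set C := (1 - Real.exp (-2 * c * t)) / (2 * c) + Real.exp (-2 * c * t) with hCdef
    have hid : η / C * C = η := div_mul_cancel₀ η hC.ne'
    calc Real.sqrt (z t)
        ≤ (ε + η / C) * (1 - Real.exp (-2 * c * t)) / (2 * c)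
          + η / C * Real.exp (-2 * c * t) := h
      _ = ε * (1 - Real.exp (-2 * c * t)) / (2 * c) + η / C * C := by
          rw [hCdef]; ring
      _ = ε * (1 - Real.exp (-2 * c * t)) / (2 * c) + η := by rw [hid]
  · -- c = 0
    intro hc
    subst hc
    have key : ∀ δ : ℝ, 0 < δ → Real.sqrt (z t) ≤ δ + (ε + δ) * t := by
      intro δ hδ
      set g : ℝ → ℝ := fun s => δ + (ε + δ) * s with hgdef
      have hgd : ∀ s : ℝ, HasDerivAt g (ε + δ) s := by
        intro s
        have h := ((hasDerivAt_id s).const_mul (ε + δ)).const_add δ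
        simpa [hgdef] using h
      have hgpos : ∀ s : ℝ, 0 ≤ s → 0 < g s := by
        intro s hs; simp only [hgdef]; nlinarith
      have hstrict : ∀ s ∈ Ico (0:ℝ) T,
          2 * ε * g s - 4 * 0 * (g s * g s) < 2 * g s * (fun _ => ε + δ) s := by
        intro s hs
        have hg := hgpos s hs.1
        simp only
        nlinarith
      have hle := supersol13 T ε 0 z hz0 hzdiff (by simpa using hode) g (fun _ => ε + δ)
        hgd hgpos hstrict t ht
      calc Real.sqrt (z t) ≤ Real.sqrt (g t * g t) := Real.sqrt_le_sqrt hle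
        _ = g t := Real.sqrt_mul_self (hgpos t ht.1).le
    apply le_of_forall_pos_le_add
    intro η hη
    have hC : (0:ℝ) < 1 + t := by have := ht.1; linarith
    have h := key (η / (1 + t)) (div_pos hη hC)
    have hid : η / (1 + t) * (1 + t) = η := div_mul_cancel₀ η hC.ne'
    nlinarith [h, hid]
end
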